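/- arXiv:1905.08891 — 7 statements merged into one kernel-verified Lean document; each statement's English description precedes it below -/
import Mathlib

section
/- Let p and n be even positive integers with n >= 2p, and let N be an even positive divisor of p. Then there exists an even natural number k with 0 <= k <= p-2 such that gcd(p, n-p+k) = N. -/
/-- Let `p` and `n` be even positive integers with `n ≥ 2p`, and let `N` be an even
positive divisor of `p`.  Then there is an even `k` with `0 ≤ k ≤ p - 2` such that
`gcd(p, n - p + k) = N`. -/
theorem exists_even_k_gcd_eq (p n N : ℕ) (hp : 0 < p) (hpe : Even p)
    (hn : 0 < n) (hne : Even n) (hnp : 2 * p ≤ n)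
    (hN : 0 < N) (hNe : Even N) (hNd : N ∣ p) :
    ∃ k : ℕ, Even k ∧ k ≤ p - 2 ∧ Nat.gcd p (n - p + k) = N := by
  have h2p : (2 : ℕ) ∣ p := hpe.two_dvd
  set m := n - p with hm
  set r := m % p with hrdef
  have hr : r < p := Nat.mod_lt _ hp
  set k := (N + p - r) % p with hkdef
  have hk : k < p := Nat.mod_lt _ hp
  -- parity facts
  have hm2 : m % 2 = 0 := by
    have hn2 := Nat.even_iff.mp hne
    have hp2 := Nat.even_iff.mp hpe
    omega
  have hr2 : r % 2 = 0 := by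
    rw [hrdef, Nat.mod_mod_of_dvd _ h2p]; exact hm2
  have hk2 : k % 2 = 0 := by
    rw [hkdef, Nat.mod_mod_of_dvd _ h2p]
    have hN2 := Nat.even_iff.mp hNe
    have hp2 := Nat.even_iff.mp hpe
    omega
  have hp2 := Nat.even_iff.mp hpe
  refine ⟨k, Nat.even_iff.mpr hk2, by omega, ?_⟩
  have e1 : m + k ≡ r + (N + p - r) [MOD p] :=
    (Nat.mod_modEq m p).symm.add (Nat.mod_modEq _ p)
  have key : (m + k) % p = N % p := by
    rw [show r + (N + p - r) = N + p from by omega] at e1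
    have : (m + k) % p = (N + p) % p := e1
    rwa [Nat.add_mod_right] at this
  rw [Nat.gcd_rec p (m + k), key, ← Nat.gcd_rec]
  exact Nat.gcd_eq_right hNd
end

section
/- Let n be an odd integer with n > 3 such that n-1 is divisible by 4, and let d be a positive divisor of n-1 with d congruent to 2 modulo 4. Then there exists an even integer k with n-3 < 2k and k <= n-2 such that gcd(n-1, 2k+2) = d. -/
/-- Let `n` be an odd integer with `n > 3` such that `4 ∣ n - 1`, and let `d` be a
positive divisor of `n - 1` with `d ≡ 2 (mod 4)`.  Then there exists an even `k` with
`n - 3 < 2k` and `k ≤ n - 2` such that `gcd(n - 1, 2k + 2) = d`. -/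
theorem exists_even_k_gcd_eq_of_four_dvd (n d : ℕ) (hn3 : 3 < n) (hno : Odd n)
    (h4 : 4 ∣ n - 1) (hd : 0 < d) (hdd : d ∣ n - 1) (hd4 : d % 4 = 2) :
    ∃ k : ℕ, Even k ∧ n - 3 < 2 * k ∧ k ≤ n - 2 ∧ Nat.gcd (n - 1) (2 * k + 2) = d := by
  have hdle : d ≤ n - 1 := Nat.le_of_dvd (by omega) hdd
  refine ⟨(n - 1 + d) / 2 - 1, ?_, by omega, by omega, ?_⟩
  · rw [Nat.even_iff]; omega
  · have h1 : 2 * ((n - 1 + d) / 2 - 1) + 2 = d + (n - 1) := by omega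
    rw [h1, Nat.gcd_add_self_right]
    exact Nat.gcd_eq_right hdd
end

section
/- Let n be an odd integer with n > 3 such that n-1 is congruent to 2 modulo 4, and let d be an even positive divisor of n-1 with d < n-1. Then there exists an even integer k with n-3 < 2k and k <= n-2 such that gcd(n-1, 2k+2) = d. -/
/-- Let `n` be an odd integer with `n > 3` such that `n - 1 ≡ 2 (mod 4)`, and let `d`
be an even positive divisor of `n - 1` with `d < n - 1`.  Then there exists an even `k`
with `n - 3 < 2k` and `k ≤ n - 2` such that `gcd(n - 1, 2k + 2) = d`. -/
theorem exists_even_k_gcd_eq_of_two_mod_four (n d : ℕ) (hn3 : 3 < n) (hno : Odd n)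
    (h2 : (n - 1) % 4 = 2) (hd : 0 < d) (hde : Even d) (hdd : d ∣ n - 1)
    (hdlt : d < n - 1) :
    ∃ k : ℕ, Even k ∧ n - 3 < 2 * k ∧ k ≤ n - 2 ∧ Nat.gcd (n - 1) (2 * k + 2) = d := by
  obtain ⟨e, he⟩ := hde
  have hd2 : d = 2 * e := by omega
  obtain ⟨c, hc⟩ := hdd
  have hc1 : 1 ≤ c := by
    by_contra h
    have hc0 : c = 0 := by omega
    subst hc0
    simp at hc
    omega
  -- e is odd, since n-1 ≡ 2 mod 4
  have heodd : e % 2 = 1 := by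
    by_contra h
    have h4 : (4 : ℕ) ∣ d := by omega
    have : (4 : ℕ) ∣ n - 1 := h4.trans ⟨c, hc⟩
    omega
  have hno' : n % 2 = 1 := Nat.odd_iff.mp hno
  refine ⟨n - 2 - e, ?_, ?_, ?_, ?_⟩
  · rw [Nat.even_iff]; omega
  · omega
  · omega
  · have key : 2 * (n - 2 - e) + 2 = d * (2 * c - 1) := by
      have h1 : d * (2 * c - 1) + d = d * (2 * c) := by
        rw [← Nat.mul_succ]; congr 1; omega
      have h2' : d * (2 * c) = 2 * (d * c) := by ring
      omega
    rw [key, hc, Nat.gcd_mul_left]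
    have hcop : Nat.gcd c (2 * c - 1) = 1 := by
      have g1 : Nat.gcd c (2 * c - 1) ∣ 2 * c := (Nat.gcd_dvd_left _ _).mul_left 2
      have g2 : Nat.gcd c (2 * c - 1) ∣ 2 * c - 1 := Nat.gcd_dvd_right _ _
      have g3 : Nat.gcd c (2 * c - 1) ∣ 1 := by
        have := Nat.dvd_sub g1 g2
        have h : 2 * c - (2 * c - 1) = 1 := by omega
        rwa [h] at this
      exact Nat.dvd_one.mp g3
    rw [hcop, mul_one]
end

section
/- Let n be an odd integer with n > 3 such that n-1 is divisible by 4. Then the set { gcd(n-1, 2k+2) : k an even natural number with n-3 < 2k and k <= n-2 } equals the set { d : d is a positive divisor of n-1 with d congruent to 2 modulo 4 }. -/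
/-- Let `n` be an odd integer with `n > 3` such that `4 ∣ n - 1`.  Then the set
`{ gcd(n-1, 2k+2) : k even, n - 3 < 2k, k ≤ n - 2 }` equals the set of positive
divisors of `n - 1` congruent to `2` modulo `4`. -/
theorem gcd_set_eq_of_four_dvd (n : ℕ) (hn3 : 3 < n) (hno : Odd n) (h4 : 4 ∣ n - 1) :
    {g : ℕ | ∃ k : ℕ, Even k ∧ n - 3 < 2 * k ∧ k ≤ n - 2 ∧
        g = Nat.gcd (n - 1) (2 * k + 2)} =
      {d : ℕ | 0 < d ∧ d ∣ n - 1 ∧ d % 4 = 2} := by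
  obtain ⟨m, hm⟩ := h4
  have hm1 : 1 ≤ m := by omega
  ext g
  simp only [Set.mem_setOf_eq]
  constructor
  · rintro ⟨k, hk, h1, h2, rfl⟩
    obtain ⟨j, hj⟩ := hk
    refine ⟨Nat.gcd_pos_of_pos_left _ (by omega), Nat.gcd_dvd_left _ _, ?_⟩
    have h2g : 2 ∣ Nat.gcd (n - 1) (2 * k + 2) :=
      Nat.dvd_gcd ⟨2 * m, by omega⟩ ⟨k + 1, by ring⟩
    have h4g : ¬ (4 ∣ Nat.gcd (n - 1) (2 * k + 2)) := by
      intro h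
      have := h.trans (Nat.gcd_dvd_right (n - 1) (2 * k + 2))
      omega
    omega
  · rintro ⟨hd0, hdvd, hmod⟩
    have he : g = 2 * (g / 2) := by omega
    set e := g / 2 with hedef
    have he2m : g ∣ 4 * m := by rwa [hm] at hdvd
    have hele : g ≤ 4 * m := Nat.le_of_dvd (by omega) he2m
    refine ⟨2 * m + e - 1, ?_, by omega, by omega, ?_⟩
    · rw [Nat.even_iff]; omega
    · have h2k : 2 * (2 * m + e - 1) + 2 = 2 * e + 4 * m := by omega
      rw [hm, h2k, Nat.gcd_add_self_right]
      rw [he] at he2m ⊢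
      exact (Nat.gcd_eq_right he2m).symm
end

section
/- Let n be an odd integer with n > 3 such that n-1 is congruent to 2 modulo 4. Then the set { gcd(n-1, 2k+2) : k an even natural number with n-3 < 2k and k <= n-2 } equals the set { d : d is an even positive divisor of n-1 with d < n-1 }. -/
/-- Let `n` be an odd integer with `n > 3` such that `n - 1 ≡ 2 (mod 4)`.  Then the set
`{ gcd(n-1, 2k+2) : k even, n - 3 < 2k, k ≤ n - 2 }` equals the set of even positive
divisors of `n - 1` that are strictly less than `n - 1`. -/
theorem gcd_set_eq_of_two_mod_four (n : ℕ) (hn3 : 3 < n) (hno : Odd n)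
    (h2 : (n - 1) % 4 = 2) :
    {g : ℕ | ∃ k : ℕ, Even k ∧ n - 3 < 2 * k ∧ k ≤ n - 2 ∧
        g = Nat.gcd (n - 1) (2 * k + 2)} =
      {d : ℕ | 0 < d ∧ Even d ∧ d ∣ n - 1 ∧ d < n - 1} := by
  obtain ⟨t, ht⟩ := hno
  have hn5 : 5 ≤ n := by omega
  obtain ⟨m', hm'⟩ : ∃ m', n - 1 = 2 * m' := ⟨(n - 1) / 2, by omega⟩
  have hm2 : 2 ≤ m' := by omega
  have hm'odd : Odd m' := by
    rcases Nat.even_or_odd m' with h | h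
    · exfalso; obtain ⟨u, hu⟩ := h; omega
    · exact h
  ext g
  simp only [Set.mem_setOf_eq]
  constructor
  · rintro ⟨k, ⟨j, hj⟩, hk1, hk2, rfl⟩
    have hdvd : Nat.gcd (n - 1) (2 * k + 2) ∣ n - 1 := Nat.gcd_dvd_left _ _
    have hpos : 0 < Nat.gcd (n - 1) (2 * k + 2) :=
      Nat.gcd_pos_of_pos_left _ (by omega)
    have heven : 2 ∣ Nat.gcd (n - 1) (2 * k + 2) :=
      Nat.dvd_gcd (by omega) (by omega)
    refine ⟨hpos, even_iff_two_dvd.mpr heven, hdvd, ?_⟩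
    have hle := Nat.le_of_dvd (by omega) hdvd
    rcases lt_or_eq_of_le hle with h | h
    · exact h
    · exfalso
      have hd2 : n - 1 ∣ 2 * k + 2 := h ▸ Nat.gcd_dvd_right _ _
      obtain ⟨c, hc⟩ := hd2
      rw [hm'] at hc
      have hlb : 2 * m' < 2 * k + 2 := by omega
      have hub : 2 * k + 2 ≤ 4 * m' := by omega
      have hcge : 2 ≤ c := by
        by_contra h'
        have h1 : 2 * k + 2 ≤ 2 * m' * 1 := by
          rw [hc]; exact Nat.mul_le_mul_left _ (by omega)
        omega
      have hcle : c ≤ 2 := by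
        by_contra h'
        have h1 : 2 * m' * 3 ≤ 2 * k + 2 := by
          rw [hc]; exact Nat.mul_le_mul_left _ (by omega)
        omega
      have : c = 2 := le_antisymm hcle hcge
      subst this
      omega
  · rintro ⟨hd0, ⟨d', hd'⟩, hdd, hdlt⟩
    have hd'eq : g = 2 * d' := by omega
    obtain ⟨c, hc0⟩ := hdd
    have hc : m' = d' * c := by
      have h1 : n - 1 = 2 * (d' * c) := by rw [hc0, hd'eq]; ring
      omega
    have hcodd : Odd c := by
      rcases Nat.even_or_odd c with h | h
      · exfalso; obtain ⟨u, hu⟩ := h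
        obtain ⟨v, hv⟩ := hm'odd
        have : d' * c = d' * (2 * u) := by rw [hu]; ring
        have h3 : d' * (2 * u) = 2 * (d' * u) := by ring
        omega
      · exact h
    have hd'pos : 0 < d' := by omega
    have hc3 : 3 ≤ c := by
      obtain ⟨v, hv⟩ := hcodd
      rcases Nat.lt_or_ge c 3 with h | h
      · interval_cases c <;> omega
      · exact h
    have h3 : d' * 3 ≤ d' * c := Nat.mul_le_mul_left _ hc3
    have hdm' : 2 * d' ≤ m' := by omega
    refine ⟨m' + g - 1, ?_, by omega, by omega, ?_⟩
    · obtain ⟨v, hv⟩ := hm'odd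
      exact ⟨v + d', by omega⟩
    · have h2k : 2 * (m' + g - 1) + 2 = 2 * m' + 4 * d' := by omega
      rw [h2k, hm']
      have hstep : Nat.gcd (2 * m') (2 * m' + 4 * d') = Nat.gcd (2 * m') (4 * d') := by
        conv_lhs => rw [show 2 * m' + 4 * d' = 4 * d' + 2 * m' by ring]
        exact Nat.gcd_add_self_right _ _
      rw [hstep, show 4 * d' = 2 * (2 * d') by ring, Nat.gcd_mul_left]
      have hcop : Nat.Coprime 2 m' := Nat.coprime_two_left.mpr hm'odd
      rw [Nat.Coprime.gcd_mul_left_cancel_right d' hcop, Nat.gcd_eq_right ⟨c, hc⟩]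
      omega
end

section
/- Let n, p, k be natural numbers with 1 <= p < n, k <= p, and n - p + k > p. Then the set R = { u in R^n : u_1^2 + ... + u_p^2 = p and u_1^2 + ... + u_k^2 + u_{p+1}^2 + ... + u_n^2 = n - p + k }, with the subspace topology from Euclidean space R^n, is homeomorphic to the product S^{p-1} x S^{n-p-1} of the unit sphere in R^p and the unit sphere in R^{n-p}. -/
open Finset
section QuadricAux
lemma sum_filter_lt' {n m : ℕ} (h : m ≤ n) (f : Fin n → ℝ) :
    ∑ i ∈ univ.filter (fun i : Fin n => (i:ℕ) < m), f i = ∑ i : Fin m, f (Fin.castLE h i) := by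
  rw [show (∑ i : Fin m, f (Fin.castLE h i)) = ∑ i ∈ univ.map (Fin.castLEEmb h), f i by
    rw [Finset.sum_map]; rfl]
  congr 1
  ext j
  simp only [Finset.mem_map, Finset.mem_univ, true_and, Finset.mem_filter, Fin.castLEEmb_apply]
  constructor
  · intro hj; exact ⟨⟨j, hj⟩, Fin.ext rfl⟩
  · rintro ⟨i, rfl⟩; exact i.2

def qemb {n p : ℕ} (h : p ≤ n) : Fin (n - p) ↪ Fin n :=
  ⟨fun j => ⟨p + j, by have := j.2; omega⟩, by
    intro a b hab; rwa [Fin.ext_iff, add_right_inj, ← Fin.ext_iff] at hab⟩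

lemma qemb_coe {n p : ℕ} (h : p ≤ n) (j : Fin (n - p)) : (qemb h j : ℕ) = p + j := rfl

lemma sum_filter_ge' {n p : ℕ} (h : p ≤ n) (f : Fin n → ℝ) :
    ∑ i ∈ univ.filter (fun i : Fin n => p ≤ (i:ℕ)), f i = ∑ j : Fin (n - p), f (qemb h j) := by
  rw [show (∑ j : Fin (n-p), f (qemb h j)) = ∑ i ∈ univ.map (qemb h), f i by
    rw [Finset.sum_map]]
  congr 1
  ext j
  simp only [Finset.mem_map, Finset.mem_univ, true_and, Finset.mem_filter]
  constructor
  · intro hj; exact ⟨⟨(j:ℕ) - p, by have := j.2; omega⟩, by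
      apply Fin.ext; rw [qemb_coe]; show p + ((j:ℕ) - p) = (j:ℕ); omega⟩
  · rintro ⟨i, rfl⟩; rw [qemb_coe]; omega

lemma mem_sphere_iff_sum' {m : ℕ} (x : EuclideanSpace ℝ (Fin m)) :
    x ∈ Metric.sphere (0 : EuclideanSpace ℝ (Fin m)) 1 ↔ ∑ i, x i ^ 2 = 1 := by
  rw [mem_sphere_zero_iff_norm, EuclideanSpace.norm_eq]
  have h0 : (0:ℝ) ≤ ∑ i, ‖x i‖ ^ 2 := by positivity
  rw [show (1:ℝ) = Real.sqrt 1 from (Real.sqrt_one).symm, Real.sqrt_inj h0 zero_le_one]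
  simp [Real.norm_eq_abs, sq_abs]

lemma sum_sq_le_univ' {m l : ℕ} (h : l ≤ m) (a : Fin m → ℝ) :
    ∑ i : Fin l, a (Fin.castLE h i) ^ 2 ≤ ∑ i, a i ^ 2 := by
  rw [show (∑ i : Fin l, a (Fin.castLE h i) ^ 2) = ∑ i ∈ univ.map (Fin.castLEEmb h), a i ^ 2 by
    rw [Finset.sum_map]; rfl]
  exact Finset.sum_le_sum_of_subset_of_nonneg (Finset.subset_univ _)
    (fun i _ _ => sq_nonneg _)

noncomputable def bwdMap (n p k : ℕ) (hk : k ≤ p) (c : ℝ)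
    (x : EuclideanSpace ℝ (Fin p) × EuclideanSpace ℝ (Fin (n - p))) :
    EuclideanSpace ℝ (Fin n) :=
  WithLp.toLp 2 fun i : Fin n => if h : (i : ℕ) < p then Real.sqrt p * x.1 ⟨i, h⟩
    else Real.sqrt (c - p * ∑ i : Fin k, x.1 (Fin.castLE hk i) ^ 2)
      * x.2 ⟨(i:ℕ) - p, by have := i.2; omega⟩

lemma bwdMap_lt {n p k : ℕ} (hk : k ≤ p) (c : ℝ) (hpn : p ≤ n) (x) (i : Fin p) :
    bwdMap n p k hk c x (Fin.castLE hpn i) = Real.sqrt p * x.1 i :=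
  dif_pos i.2

lemma bwdMap_ge {n p k : ℕ} (hk : k ≤ p) (c : ℝ) (hpn : p ≤ n) (x) (j : Fin (n - p)) :
    bwdMap n p k hk c x (qemb hpn j)
      = Real.sqrt (c - p * ∑ i : Fin k, x.1 (Fin.castLE hk i) ^ 2) * x.2 j := by
  have h1 : ¬ ((qemb hpn j : Fin n) : ℕ) < p := by rw [qemb_coe]; omega
  show dite _ _ _ = _
  rw [dif_neg h1]
  congr 1
  apply congrArg
  apply Fin.ext
  show ((qemb hpn j : Fin n) : ℕ) - p = (j : ℕ)
  rw [qemb_coe]; omega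
end QuadricAux

open Finset in
/-- Let `1 ≤ p < n`, `k ≤ p` and `n - p + k > p`.  The intersection of quadrics
`{ u ∈ ℝⁿ : u₁² + ⋯ + u_p² = p,  u₁² + ⋯ + u_k² + u_{p+1}² + ⋯ + u_n² = n - p + k }`
is homeomorphic to the product of unit spheres `S^{p-1} × S^{n-p-1}`. -/
theorem quadric_homeo_sphere_prod (n p k : ℕ) (hp : 1 ≤ p) (hpn : p < n)
    (hk : k ≤ p) (hnpk : p < n - p + k) :
    Nonempty (
      ({u : EuclideanSpace ℝ (Fin n) |
          (∑ i ∈ univ.filter fun i : Fin n => (i : ℕ) < p, u i ^ 2) = (p : ℝ) ∧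
          (∑ i ∈ univ.filter fun i : Fin n => (i : ℕ) < k ∨ p ≤ (i : ℕ), u i ^ 2)
            = ((n : ℝ) - p + k)} : Set (EuclideanSpace ℝ (Fin n))) ≃ₜ
        (Metric.sphere (0 : EuclideanSpace ℝ (Fin p)) 1 ×
          Metric.sphere (0 : EuclideanSpace ℝ (Fin (n - p))) 1)) := by
  have hpn' : p ≤ n := hpn.le
  have hkn : k ≤ n := hk.trans hpn'
  have hp0 : (0:ℝ) < p := by exact_mod_cast hp
  set c : ℝ := (n:ℝ) - (p:ℝ) + (k:ℝ) with hc_def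
  have hc : (p:ℝ) < c := by
    have h1 : ((p:ℕ):ℝ) < ((n - p + k : ℕ):ℝ) := by exact_mod_cast hnpk
    rw [hc_def]
    rwa [Nat.cast_add, Nat.cast_sub hpn'] at h1
  have hdisj : Disjoint (univ.filter fun i : Fin n => (i:ℕ) < k)
      (univ.filter fun i : Fin n => p ≤ (i:ℕ)) := by
    rw [Finset.disjoint_left]
    intro a ha hb
    simp only [mem_filter] at ha hb
    omega
  have hsplit : ∀ u : EuclideanSpace ℝ (Fin n),
      (∑ i ∈ univ.filter fun i : Fin n => (i:ℕ) < k ∨ p ≤ (i:ℕ), u i ^ 2)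
        = (∑ i : Fin k, u (Fin.castLE hkn i) ^ 2)
          + ∑ j : Fin (n-p), u (qemb hpn' j) ^ 2 := by
    intro u
    rw [Finset.filter_or, Finset.sum_union hdisj, sum_filter_lt' hkn, sum_filter_ge' hpn']
  have hr_pos : ∀ u : EuclideanSpace ℝ (Fin n),
      (∑ i : Fin p, u (Fin.castLE hpn' i) ^ 2) = (p:ℝ) →
      0 < c - ∑ i : Fin k, u (Fin.castLE hkn i) ^ 2 := by
    intro u h1
    have hle : (∑ i : Fin k, u (Fin.castLE hkn i) ^ 2)
        ≤ ∑ i : Fin p, u (Fin.castLE hpn' i) ^ 2 :=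
      sum_sq_le_univ' hk (fun i : Fin p => u (Fin.castLE hpn' i))
    rw [h1] at hle
    linarith
  have hρ_pos : ∀ a : EuclideanSpace ℝ (Fin p), (∑ i, a i ^ 2) = 1 →
      0 < c - (p:ℝ) * ∑ i : Fin k, a (Fin.castLE hk i) ^ 2 := by
    intro a ha
    have hle := sum_sq_le_univ' hk a
    rw [ha] at hle
    have h2 : (p:ℝ) * ∑ i : Fin k, a (Fin.castLE hk i) ^ 2 ≤ (p:ℝ) * 1 :=
      mul_le_mul_of_nonneg_left hle hp0.le
    linarith
  have hsp : Real.sqrt p ≠ 0 := by positivity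
  have hsq : Real.sqrt p ^ 2 = (p:ℝ) := Real.sq_sqrt hp0.le
  refine ⟨{
    toFun := fun u =>
      (⟨WithLp.toLp 2 fun i => u.1 (Fin.castLE hpn' i) / Real.sqrt p, ?_⟩,
       ⟨WithLp.toLp 2 fun j => u.1 (qemb hpn' j)
          / Real.sqrt (c - ∑ i : Fin k, u.1 (Fin.castLE hkn i) ^ 2), ?_⟩),
    invFun := fun x => ⟨bwdMap n p k hk c (x.1.1, x.2.1), ?_⟩,
    left_inv := ?_,
    right_inv := ?_,
    continuous_toFun := ?_,
    continuous_invFun := ?_ }⟩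
  · -- first sphere membership
    obtain ⟨h1, h2⟩ := u.2
    rw [sum_filter_lt' hpn'] at h1
    rw [mem_sphere_iff_sum']
    simp only [div_pow, hsq]
    rw [← Finset.sum_div, h1, div_self hp0.ne']
  · -- second sphere membership
    obtain ⟨h1, h2⟩ := u.2
    rw [sum_filter_lt' hpn'] at h1
    rw [hsplit] at h2
    have hD := hr_pos u.1 h1
    rw [mem_sphere_iff_sum']
    simp only [div_pow, Real.sq_sqrt hD.le]
    rw [← Finset.sum_div, show (∑ j : Fin (n-p), u.1 (qemb hpn' j) ^ 2)
      = c - ∑ i : Fin k, u.1 (Fin.castLE hkn i) ^ 2 by linarith, div_self hD.ne']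
  · -- invFun membership
    have ha : (∑ i, x.1.1 i ^ 2) = 1 := (mem_sphere_iff_sum' _).1 x.1.2
    have hb : (∑ j, x.2.1 j ^ 2) = 1 := (mem_sphere_iff_sum' _).1 x.2.2
    have ht := hρ_pos x.1.1 ha
    constructor
    · rw [sum_filter_lt' hpn',
        Finset.sum_congr rfl (fun i _ => by rw [bwdMap_lt hk c hpn' (x.1.1, x.2.1) i])]
      simp only [mul_pow, hsq]
      rw [← Finset.mul_sum, ha, mul_one]
    · have hbk : ∀ i : Fin k, bwdMap n p k hk c (x.1.1, x.2.1) (Fin.castLE hkn i)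
          = Real.sqrt p * x.1.1 (Fin.castLE hk i) :=
        fun i => bwdMap_lt hk c hpn' (x.1.1, x.2.1) (Fin.castLE hk i)
      rw [hsplit,
        Finset.sum_congr rfl (fun (i : Fin k) _ => by rw [hbk i]),
        Finset.sum_congr rfl (fun (j : Fin (n-p)) _ =>
          by rw [bwdMap_ge hk c hpn' (x.1.1, x.2.1) j])]
      simp only [mul_pow, hsq, Real.sq_sqrt ht.le]
      rw [← Finset.mul_sum, ← Finset.mul_sum, hb, mul_one]
      ring
  · -- left_inv
    intro u
    obtain ⟨h1, h2⟩ := u.2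
    rw [sum_filter_lt' hpn'] at h1
    have hD := hr_pos u.1 h1
    apply Subtype.ext
    apply PiLp.ext; intro i
    show bwdMap n p k hk c _ i = u.1 i
    by_cases hip : (i:ℕ) < p
    · rw [show i = Fin.castLE hpn' ⟨(i:ℕ), hip⟩ from Fin.ext rfl, bwdMap_lt]
      exact mul_div_cancel₀ _ hsp
    · rw [show i = qemb hpn' ⟨(i:ℕ) - p, by have := i.2; omega⟩ from
        Fin.ext (by rw [qemb_coe]; simp; omega), bwdMap_ge]
      have harg : c - (p:ℝ) * ∑ i : Fin k,
          ((u.1 (Fin.castLE hpn' (Fin.castLE hk i))) / Real.sqrt p) ^ 2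
          = c - ∑ i : Fin k, u.1 (Fin.castLE hkn i) ^ 2 := by
        congr 1
        rw [Finset.mul_sum]
        apply Finset.sum_congr rfl
        intro i _
        rw [div_pow, hsq, mul_comm, div_mul_cancel₀ _ hp0.ne']
        rfl
      rw [show (∑ i : Fin k,
          ((fun i => u.1 (Fin.castLE hpn' i) / Real.sqrt p) (Fin.castLE hk i)) ^ 2)
          = ∑ i : Fin k,
          ((u.1 (Fin.castLE hpn' (Fin.castLE hk i))) / Real.sqrt p) ^ 2 from rfl]
      rw [harg]
      exact mul_div_cancel₀ _ (Real.sqrt_ne_zero'.2 hD)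
  · -- right_inv
    intro x
    have ha : (∑ i, x.1.1 i ^ 2) = 1 := (mem_sphere_iff_sum' _).1 x.1.2
    have ht := hρ_pos x.1.1 ha
    have hρ : Real.sqrt (c - (p:ℝ) * ∑ i : Fin k, x.1.1 (Fin.castLE hk i) ^ 2) ≠ 0 :=
      Real.sqrt_ne_zero'.2 ht
    apply Prod.ext
    · apply Subtype.ext
      apply PiLp.ext; intro i
      show bwdMap n p k hk c (x.1.1, x.2.1) (Fin.castLE hpn' i) / Real.sqrt p = x.1.1 i
      rw [bwdMap_lt]
      exact mul_div_cancel_left₀ _ hsp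
    · apply Subtype.ext
      apply PiLp.ext; intro j
      show bwdMap n p k hk c (x.1.1, x.2.1) (qemb hpn' j)
          / Real.sqrt (c - ∑ i : Fin k,
              bwdMap n p k hk c (x.1.1, x.2.1) (Fin.castLE hkn i) ^ 2) = x.2.1 j
      have hbk : ∀ i : Fin k, bwdMap n p k hk c (x.1.1, x.2.1) (Fin.castLE hkn i)
          = Real.sqrt p * x.1.1 (Fin.castLE hk i) :=
        fun i => bwdMap_lt hk c hpn' (x.1.1, x.2.1) (Fin.castLE hk i)
      have hsum : (∑ i : Fin k, bwdMap n p k hk c (x.1.1, x.2.1) (Fin.castLE hkn i) ^ 2)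
          = (p:ℝ) * ∑ i : Fin k, x.1.1 (Fin.castLE hk i) ^ 2 := by
        rw [Finset.sum_congr rfl (fun (i : Fin k) _ => by rw [hbk i])]
        simp only [mul_pow, hsq]
        rw [← Finset.mul_sum]
      rw [hsum, bwdMap_ge]
      exact mul_div_cancel_left₀ _ hρ
  · -- continuity of toFun
    apply Continuous.prodMk
    · apply Continuous.subtype_mk
      exact (PiLp.continuous_toLp 2 _).comp <| continuous_pi fun i =>
        ((PiLp.continuous_apply 2 _ (Fin.castLE hpn' i)).comp continuous_subtype_val).div_const _
    · apply Continuous.subtype_mk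
      apply (PiLp.continuous_toLp 2 _).comp
      apply continuous_pi
      intro j
      apply Continuous.div
      · exact (PiLp.continuous_apply 2 _ (qemb hpn' j)).comp continuous_subtype_val
      · exact Real.continuous_sqrt.comp (continuous_const.sub
          (continuous_finset_sum _ fun i _ =>
            ((PiLp.continuous_apply 2 _ (Fin.castLE hkn i)).comp continuous_subtype_val).pow 2))
      · intro u
        have h1 := u.2.1
        rw [sum_filter_lt' hpn'] at h1
        exact Real.sqrt_ne_zero'.2 (hr_pos u.1 h1)
  · -- continuity of invFun
    apply Continuous.subtype_mk
    apply (PiLp.continuous_toLp 2 _).comp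
    apply continuous_pi
    intro i
    by_cases hip : (i:ℕ) < p
    · simp only [bwdMap, dif_pos hip]
      exact continuous_const.mul
        ((PiLp.continuous_apply 2 _ _).comp (continuous_subtype_val.comp continuous_fst))
    · simp only [bwdMap, dif_neg hip]
      apply Continuous.mul
      · exact Real.continuous_sqrt.comp (continuous_const.sub (continuous_const.mul
          (continuous_finset_sum _ fun l _ =>
            ((PiLp.continuous_apply 2 _ (Fin.castLE hk l)).comp
              (continuous_subtype_val.comp continuous_fst)).pow 2)))
      · exact (PiLp.continuous_apply 2 _ _).comp (continuous_subtype_val.comp continuous_snd)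
end

section
/- Let n and k be natural numbers with n > 3, k <= n-2, and 2k + 2 > n - 1. Then the set R = { u in R^n : u_1^2 + ... + u_{n-1}^2 = n - 1 and u_1^2 + ... + u_k^2 + u_n^2 = 2k + 2 }, with the subspace topology from Euclidean space R^n, is homeomorphic to S^{n-2} x {+1, -1}, i.e. to the disjoint union of two copies of the unit sphere in R^{n-1}. -/
set_option maxHeartbeats 2000000 in
open Finset in
/-- Let `n > 3`, `k ≤ n - 2` and `2k + 2 > n - 1`.  The intersection of quadrics
`{ u ∈ ℝⁿ : u₁² + ⋯ + u_{n-1}² = n - 1,  u₁² + ⋯ + u_k² + u_n² = 2k + 2 }`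
is homeomorphic to `S^{n-2} × {+1, -1}`, i.e. to the disjoint union of two copies of
the unit sphere in `ℝ^{n-1}`. -/
theorem quadric_homeo_sphere_two_copies (n k : ℕ) (hn : 3 < n) (hk : k ≤ n - 2)
    (hk2 : n - 1 < 2 * k + 2) :
    Nonempty (
      ({u : EuclideanSpace ℝ (Fin n) |
          (∑ i ∈ univ.filter fun i : Fin n => (i : ℕ) < n - 1, u i ^ 2) = (n : ℝ) - 1 ∧
          (∑ i ∈ univ.filter fun i : Fin n => (i : ℕ) < k ∨ (i : ℕ) = n - 1, u i ^ 2)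
            = 2 * (k : ℝ) + 2} : Set (EuclideanSpace ℝ (Fin n))) ≃ₜ
        (Metric.sphere (0 : EuclideanSpace ℝ (Fin (n - 1))) 1 × Bool)) := by
  classical
  have hn4 : (4:ℝ) ≤ (n:ℝ) := by exact_mod_cast hn
  have hk2' : (n:ℝ) - 1 < 2 * (k:ℝ) + 2 := by
    have := hk2
    have h1 : ((n - 1 : ℕ) : ℝ) < ((2 * k + 2 : ℕ) : ℝ) := by exact_mod_cast hk2
    rw [Nat.cast_sub (by omega)] at h1
    push_cast at h1 ⊢
    linarith
  set c : ℝ := Real.sqrt ((n:ℝ) - 1) with hcdef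
  have hnpos : (0:ℝ) < (n:ℝ) - 1 := by linarith
  have hc : 0 < c := Real.sqrt_pos.mpr hnpos
  have hc2 : c ^ 2 = (n:ℝ) - 1 := Real.sq_sqrt hnpos.le
  set e : Fin (n - 1) → Fin n := Fin.castLE (Nat.sub_le n 1) with hedef
  have he : ∀ j : Fin (n - 1), ((e j : Fin n) : ℕ) = (j : ℕ) := fun j => rfl
  set lst : Fin n := ⟨n - 1, by omega⟩ with hlstdef
  -- the set S
  set S : Set (EuclideanSpace ℝ (Fin n)) :=
    {u : EuclideanSpace ℝ (Fin n) |
      (∑ i ∈ univ.filter fun i : Fin n => (i : ℕ) < n - 1, u i ^ 2) = (n : ℝ) - 1 ∧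
      (∑ i ∈ univ.filter fun i : Fin n => (i : ℕ) < k ∨ (i : ℕ) = n - 1, u i ^ 2)
        = 2 * (k : ℝ) + 2} with hSdef
  -- finset identities
  have hmap : (univ.filter fun i : Fin n => (i : ℕ) < n - 1)
      = univ.map ⟨e, Fin.castLE_injective _⟩ := by
    ext i
    simp only [mem_filter, mem_univ, true_and, mem_map, Function.Embedding.coeFn_mk]
    constructor
    · intro h; exact ⟨⟨(i : ℕ), h⟩, rfl⟩
    · rintro ⟨j, rfl⟩; exact j.2
  have hmapk : (univ.filter fun i : Fin n => (i : ℕ) < k)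
      = (univ.filter fun j : Fin (n - 1) => (j : ℕ) < k).map ⟨e, Fin.castLE_injective _⟩ := by
    ext i
    simp only [mem_filter, mem_univ, true_and, mem_map, Function.Embedding.coeFn_mk]
    constructor
    · intro h; exact ⟨⟨(i : ℕ), by omega⟩, h, rfl⟩
    · rintro ⟨j, hj, rfl⟩; exact hj
  have hlstnot : lst ∉ (univ.filter fun i : Fin n => (i : ℕ) < k) := by
    simp only [mem_filter, mem_univ, true_and, hlstdef]
    omega
  have hsplit : (univ.filter fun i : Fin n => (i : ℕ) < k ∨ (i : ℕ) = n - 1)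
      = insert lst (univ.filter fun i : Fin n => (i : ℕ) < k) := by
    ext i
    simp only [mem_filter, mem_univ, true_and, mem_insert, Fin.ext_iff, hlstdef]
    tauto
  -- sum rewrites
  have hA : ∀ u : EuclideanSpace ℝ (Fin n),
      (∑ i ∈ univ.filter fun i : Fin n => (i : ℕ) < n - 1, u i ^ 2)
        = ∑ j : Fin (n - 1), u (e j) ^ 2 := by
    intro u; rw [hmap, Finset.sum_map]; rfl
  have hB : ∀ u : EuclideanSpace ℝ (Fin n),
      (∑ i ∈ univ.filter fun i : Fin n => (i : ℕ) < k ∨ (i : ℕ) = n - 1, u i ^ 2)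
        = u lst ^ 2 + ∑ j ∈ univ.filter fun j : Fin (n - 1) => (j : ℕ) < k, u (e j) ^ 2 := by
    intro u
    rw [hsplit, Finset.sum_insert hlstnot, hmapk, Finset.sum_map]
    rfl
  -- the partial-sum bound
  have hPS : ∀ u : EuclideanSpace ℝ (Fin n),
      (∑ j ∈ univ.filter fun j : Fin (n - 1) => (j : ℕ) < k, u (e j) ^ 2)
        ≤ ∑ j : Fin (n - 1), u (e j) ^ 2 :=
    fun u => Finset.sum_le_sum_of_subset_of_nonneg (Finset.filter_subset _ _)
      (fun _ _ _ => sq_nonneg _)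
  have hPSnn : ∀ u : EuclideanSpace ℝ (Fin n),
      0 ≤ ∑ j ∈ univ.filter fun j : Fin (n - 1) => (j : ℕ) < k, u (e j) ^ 2 :=
    fun u => Finset.sum_nonneg fun _ _ => sq_nonneg _
  -- last coordinate is nonzero on S
  have hlast : ∀ u ∈ S, 0 < u lst ^ 2 := by
    intro u hu
    obtain ⟨h1, h2⟩ := hu
    rw [hB] at h2
    rw [hA] at h1
    have := hPS u
    rw [h1] at this
    nlinarith [hPSnn u]
  have hlastne : ∀ u ∈ S, u lst ≠ 0 := fun u hu => by
    have := hlast u hu; intro h; rw [h] at this; simp at this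
  -- sphere membership for images
  have hsx : ∀ u ∈ S,
      (WithLp.toLp 2 (fun j => c⁻¹ * u (e j)) : EuclideanSpace ℝ (Fin (n - 1)))
        ∈ Metric.sphere (0 : EuclideanSpace ℝ (Fin (n - 1))) 1 := by
    intro u hu
    refine mem_sphere_zero_iff_norm.mpr ?_
    rw [EuclideanSpace.norm_eq]
    have h1 := (hA u) ▸ hu.1
    have : (∑ j : Fin (n - 1), ‖c⁻¹ * u (e j)‖ ^ 2) = 1 := by
      simp only [norm_mul, Real.norm_eq_abs, mul_pow, sq_abs]
      rw [← Finset.mul_sum, h1]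
      rw [← hc2]
      field_simp
    rw [this, Real.sqrt_one]
  -- the forward map
  set F : S → (Metric.sphere (0 : EuclideanSpace ℝ (Fin (n - 1))) 1 × Bool) :=
    fun u => (⟨WithLp.toLp 2 (fun j => c⁻¹ * (u : EuclideanSpace ℝ (Fin n)) (e j)), hsx u u.2⟩,
      decide (0 < (u : EuclideanSpace ℝ (Fin n)) lst)) with hFdef
  have hinj : Function.Injective F := by
    rintro ⟨u, hu⟩ ⟨v, hv⟩ h
    rw [Prod.ext_iff] at h
    obtain ⟨h1, h2⟩ := h
    have hcoord : ∀ j : Fin (n - 1), u (e j) = v (e j) := by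
      intro j
      have := congrArg (fun z => (z.1 : EuclideanSpace ℝ (Fin (n - 1))) j) h1
      simp only [hFdef, PiLp.toLp_apply] at this
      simpa using mul_left_cancel₀ (inv_ne_zero hc.ne') this
    have hsq : u lst ^ 2 = v lst ^ 2 := by
      have h2u := hu.2; have h2v := hv.2
      rw [hB] at h2u h2v
      have : (∑ j ∈ univ.filter fun j : Fin (n - 1) => (j : ℕ) < k, u (e j) ^ 2)
          = ∑ j ∈ univ.filter fun j : Fin (n - 1) => (j : ℕ) < k, v (e j) ^ 2 :=
        Finset.sum_congr rfl fun j _ => by rw [hcoord j]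
      linarith
    have hsign' : (0 < u lst ↔ 0 < v lst) := by
      simpa [hFdef, decide_eq_decide] using h2
    have hlu := hlastne u hu
    have hlv := hlastne v hv
    have hlasteq : u lst = v lst := by
      rcases lt_or_gt_of_ne hlu with hu0 | hu0 <;> rcases lt_or_gt_of_ne hlv with hv0 | hv0
      · nlinarith
      · exact absurd (hsign'.mpr hv0) (by linarith)
      · exact absurd (hsign'.mp hu0) (by linarith)
      · nlinarith
    apply Subtype.ext
    ext i
    rcases lt_or_eq_of_le (Nat.lt_succ_iff.mp (by omega : (i:ℕ) < (n-1) + 1)) with hi | hi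
    · exact hcoord ⟨(i : ℕ), hi⟩
    · have : i = lst := Fin.ext hi
      rw [this]; exact hlasteq
  have hsurj : Function.Surjective F := by
    rintro ⟨⟨x, hx⟩, b⟩
    set ε : ℝ := if b then 1 else -1 with hεdef
    have hε2 : ε ^ 2 = 1 := by rcases b <;> simp [hεdef]
    have hxsum : (∑ j : Fin (n - 1), x j ^ 2) = 1 := by
      rw [mem_sphere_zero_iff_norm, EuclideanSpace.norm_eq] at hx
      have h := congrArg (· ^ 2) hx
      simp only at h
      rw [Real.sq_sqrt (Finset.sum_nonneg fun _ _ => sq_nonneg _)] at h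
      simpa [sq_abs] using h
    set t : ℝ := ∑ j ∈ univ.filter fun j : Fin (n - 1) => (j : ℕ) < k, (c * x j) ^ 2 with htdef
    have htnn : 0 ≤ t := Finset.sum_nonneg fun _ _ => sq_nonneg _
    have htle : t ≤ (n:ℝ) - 1 := by
      have h1 : t ≤ ∑ j : Fin (n - 1), (c * x j) ^ 2 :=
        Finset.sum_le_sum_of_subset_of_nonneg (Finset.filter_subset _ _)
          (fun _ _ _ => sq_nonneg _)
      have h2 : (∑ j : Fin (n - 1), (c * x j) ^ 2) = (n:ℝ) - 1 := by
        simp only [mul_pow]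
        rw [← Finset.mul_sum, hxsum, mul_one, hc2]
      linarith
    set R : ℝ := 2 * (k:ℝ) + 2 - t with hRdef
    have hRpos : 0 < R := by rw [hRdef]; linarith
    set u : EuclideanSpace ℝ (Fin n) :=
      WithLp.toLp 2 (fun i : Fin n => if h : (i : ℕ) < n - 1 then c * x ⟨(i : ℕ), h⟩ else ε * Real.sqrt R) with hudef
    have hue : ∀ j : Fin (n - 1), u (e j) = c * x j := by
      intro j
      have h2 : ((e j : Fin n) : ℕ) < n - 1 := j.2
      simp only [hudef, PiLp.toLp_apply]
      rw [dif_pos h2]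
      exact congrArg (fun z => c * x z) (Fin.ext (he j))
    have hul : u lst = ε * Real.sqrt R := by
      simp only [hudef, PiLp.toLp_apply]
      exact dif_neg (lt_irrefl _)
    have husum : (∑ j ∈ univ.filter fun j : Fin (n - 1) => (j : ℕ) < k, u (e j) ^ 2) = t := by
      rw [htdef]
      exact Finset.sum_congr rfl fun j _ => by rw [hue j]
    have huS : u ∈ S := by
      constructor
      · rw [hA]
        have : (∑ j : Fin (n - 1), u (e j) ^ 2) = ∑ j : Fin (n - 1), (c * x j) ^ 2 :=
          Finset.sum_congr rfl fun j _ => by rw [hue j]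
        rw [this]
        simp only [mul_pow]
        rw [← Finset.mul_sum, hxsum, mul_one, hc2]
      · rw [hB, husum, hul]
        rw [mul_pow, hε2, one_mul, Real.sq_sqrt hRpos.le]
        rw [hRdef]; ring
    refine ⟨⟨u, huS⟩, ?_⟩
    rw [hFdef]
    refine Prod.ext ?_ ?_
    · apply Subtype.ext
      ext j
      show c⁻¹ * u (e j) = x j
      rw [hue j, ← mul_assoc, inv_mul_cancel₀ hc.ne', one_mul]
    · show decide (0 < u lst) = b
      rw [hul]
      have hs := Real.sqrt_pos.mpr hRpos
      rcases b with _ | _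
      · have hε : ε = -1 := by simp [hεdef]
        rw [hε, decide_eq_false_iff_not]
        have h' : -1 * Real.sqrt R < 0 := by rw [neg_one_mul]; exact neg_lt_zero.mpr hs
        exact lt_asymm h'
      · have hε : ε = 1 := by simp [hεdef]
        rw [hε, one_mul, decide_eq_true_eq]
        exact hs
  -- compactness of S
  have hcontsum : ∀ s : Finset (Fin n),
      Continuous fun u : EuclideanSpace ℝ (Fin n) => ∑ i ∈ s, u i ^ 2 := by
    intro s
    exact continuous_finset_sum _ fun i _ => ((EuclideanSpace.proj i).continuous.pow 2)
  have hclosed : IsClosed S := by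
    have : S = {u : EuclideanSpace ℝ (Fin n) |
        (∑ i ∈ univ.filter fun i : Fin n => (i : ℕ) < n - 1, u i ^ 2) = (n : ℝ) - 1} ∩
        {u : EuclideanSpace ℝ (Fin n) |
        (∑ i ∈ univ.filter fun i : Fin n => (i : ℕ) < k ∨ (i : ℕ) = n - 1, u i ^ 2)
          = 2 * (k : ℝ) + 2} := rfl
    rw [this]
    exact (isClosed_eq (hcontsum _) continuous_const).inter
      (isClosed_eq (hcontsum _) continuous_const)
  have huniv : (univ : Finset (Fin n))
      = insert lst (univ.filter fun i : Fin n => (i : ℕ) < n - 1) := by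
    ext i
    simp only [mem_univ, mem_insert, mem_filter, true_and, true_iff, Fin.ext_iff, hlstdef]
    have := i.2
    omega
  have hbounded : Bornology.IsBounded S := by
    rw [isBounded_iff_forall_norm_le]
    refine ⟨Real.sqrt (((n:ℝ) - 1) + (2 * (k:ℝ) + 2)), ?_⟩
    intro u hu
    rw [EuclideanSpace.norm_eq]
    apply Real.sqrt_le_sqrt
    have hsum : (∑ i : Fin n, ‖u i‖ ^ 2) = u lst ^ 2 +
        (∑ i ∈ univ.filter fun i : Fin n => (i : ℕ) < n - 1, u i ^ 2) := by
      simp only [Real.norm_eq_abs, sq_abs]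
      conv_lhs => rw [huniv]
      rw [Finset.sum_insert (by simp [hlstdef])]
    rw [hsum, hu.1]
    have h2 := hu.2
    rw [hB] at h2
    have := hPSnn u
    linarith
  have hScompact : IsCompact S := Metric.isCompact_of_isClosed_isBounded hclosed hbounded
  haveI : CompactSpace S := isCompact_iff_compactSpace.mp hScompact
  -- continuity of F
  have hcontF : Continuous F := by
    rw [hFdef]
    apply Continuous.prodMk
    · apply Continuous.subtype_mk
      exact (EuclideanSpace.equiv (Fin (n - 1)) ℝ).symm.continuous.comp
        (continuous_pi fun j => continuous_const.mul
          ((EuclideanSpace.proj (e j)).continuous.comp continuous_subtype_val))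
    · apply IsLocallyConstant.continuous
      rw [IsLocallyConstant.iff_isOpen_fiber]
      have heval : Continuous fun u : S => (u : EuclideanSpace ℝ (Fin n)) lst :=
        (EuclideanSpace.proj lst).continuous.comp continuous_subtype_val
      intro y
      rcases y with _ | _
      · have : ((fun u : S => decide (0 < (u : EuclideanSpace ℝ (Fin n)) lst)) ⁻¹' {false})
            = (fun u : S => (u : EuclideanSpace ℝ (Fin n)) lst) ⁻¹' (Set.Iio 0) := by
          ext ⟨u, hu⟩
          simp only [Set.mem_preimage, Set.mem_singleton_iff, decide_eq_false_iff_not,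
            Set.mem_Iio, not_lt]
          constructor
          · intro h; exact lt_of_le_of_ne h (hlastne u hu)
          · intro h; exact h.le
        rw [this]
        exact heval.isOpen_preimage _ isOpen_Iio
      · have : ((fun u : S => decide (0 < (u : EuclideanSpace ℝ (Fin n)) lst)) ⁻¹' {true})
            = (fun u : S => (u : EuclideanSpace ℝ (Fin n)) lst) ⁻¹' (Set.Ioi 0) := by
          ext ⟨u, hu⟩
          simp
        rw [this]
        exact heval.isOpen_preimage _ isOpen_Ioi
  have hbij : Function.Bijective F := ⟨hinj, hsurj⟩
  exact ⟨Continuous.homeoOfEquivCompactToT2 (f := Equiv.ofBijective F hbij) hcontF⟩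
end
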